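/- Let N = (V,F) be a maximal directed mixed graph and let e be a directed edge α→β in N. Then I(N − e) = I(N) if and only if α ∈ u(β, I(N − e)), where N − e denotes the DMG (V, F∖{e}). -/

import Mathlib

/-!
Directed mixed graphs (DMGs) with μ-separation, following
Mogensen & Hansen, "Markov equivalence of marginalized local independence graphs".
-/

universe u

/-- A directed mixed graph on node set `V`: a set of directed edges (`dir a b`
meaning `a → b`) and a set of bidirected edges (`bi`, a symmetric relation since
bidirected edges are unordered pairs).  Loops are allowed. -/
structure DMG (V : Type u) where
  dir : V → V → Prop
  bi : V → V → Prop
  bi_symm : ∀ a b, bi a b → bi b a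

namespace DMG

variable {V : Type u}

/-- A single step of a walk: an edge instance together with the direction in
which it is traversed (this records, in particular, orientations of loops).
A directed edge has a tail at its source and a head at its target; a bidirected
edge has heads at both endpoints. -/
inductive Step (G : DMG V) : V → V → Type u
  | dirF : ∀ {a b : V}, G.dir a b → Step G a b
  | dirB : ∀ {a b : V}, G.dir b a → Step G a b
  | bid  : ∀ {a b : V}, G.bi a b → Step G a b

/-- Whether the step has a head (edge mark) at its start node. -/
def Step.headStart {G : DMG V} : ∀ {a b : V}, Step G a b → Bool
  | _, _, .dirF _ => false
  | _, _, .dirB _ => true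
  | _, _, .bid _ => true

/-- Whether the step has a head (edge mark) at its end node. -/
def Step.headEnd {G : DMG V} : ∀ {a b : V}, Step G a b → Bool
  | _, _, .dirF _ => true
  | _, _, .dirB _ => false
  | _, _, .bid _ => true

/-- The step traverses a bidirected edge. -/
def Step.IsBid {G : DMG V} {a b : V} : Step G a b → Prop
  | .bid _ => True
  | _ => False

/-- The step traverses a directed edge, forwards. -/
def Step.IsDirF {G : DMG V} {a b : V} : Step G a b → Prop
  | .dirF _ => True
  | _ => False

/-- The underlying edge of a step: a directed edge is the ordered pair
(tail, head); a bidirected edge is the unordered pair of its endpoints. -/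
def Step.edge {G : DMG V} : ∀ {a b : V}, Step G a b → (V × V) ⊕ (Sym2 V)
  | a, b, .dirF _ => Sum.inl (a, b)
  | a, b, .dirB _ => Sum.inl (b, a)
  | a, b, .bid _ => Sum.inr s(a, b)

/-- A walk in a DMG: an alternating sequence of nodes and edges, each edge
between its neighbouring nodes, with a chosen orientation of each edge
(in particular of each directed loop). -/
inductive Walk (G : DMG V) : V → V → Type u
  | nil (a : V) : Walk G a a
  | cons {a b c : V} (s : Step G a b) (w : Walk G b c) : Walk G a c

namespace Walk

variable {G : DMG V}

/-- A nontrivial walk contains at least one edge. -/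
def Nontrivial : ∀ {a b : V}, Walk G a b → Prop
  | _, _, .nil _ => False
  | _, _, .cons _ _ => True

/-- The list of nodes of a walk, in order (with multiplicity). -/
def nodes : ∀ {a b : V}, Walk G a b → List V
  | a, _, .nil _ => [a]
  | a, _, .cons _ w => a :: w.nodes

/-- The non-endpoint (internal) nodes of a walk, in order (with multiplicity). -/
def interior {a b : V} (w : Walk G a b) : List V :=
  (w.nodes.dropLast).drop 1

/-- The list of edges of a walk. -/
def edges : ∀ {a b : V}, Walk G a b → List ((V × V) ⊕ (Sym2 V))
  | _, _, .nil _ => []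
  | _, _, .cons s w => s.edge :: w.edges

/-- Whether the first edge of the walk has a head at the first node
(`false` for a trivial walk). -/
def firstHead : ∀ {a b : V}, Walk G a b → Bool
  | _, _, .nil _ => false
  | _, _, .cons s _ => s.headStart

/-- Whether the last edge of the walk has a head at the last node
(`false` for a trivial walk). -/
def lastHead : ∀ {a b : V}, Walk G a b → Bool
  | _, _, .nil _ => false
  | _, _, .cons s (.nil _) => s.headEnd
  | _, _, .cons _ (.cons t w) => lastHead (Walk.cons t w)

/-- Helper: conditions at all remaining internal node instances of a walk,
where `h` records whether the edge arriving at the current start node has a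
head there.  A node instance is a collider if both adjoining edges have a
head at it; a collider must lie in `Anc`, a noncollider must avoid `C`. -/
def openFrom (C Anc : Set V) : ∀ {a b : V}, Bool → Walk G a b → Prop
  | _, _, _, .nil _ => True
  | a, _, h, .cons s w =>
      (if h && s.headStart then a ∈ Anc else a ∉ C) ∧ openFrom C Anc s.headEnd w

/-- Helper: every remaining internal node instance which is a collider lies in `S`. -/
def collInFrom (S : Set V) : ∀ {a b : V}, Bool → Walk G a b → Prop
  | _, _, _, .nil _ => True
  | a, _, h, .cons s w =>
      ((h && s.headStart) = true → a ∈ S) ∧ collInFrom S s.headEnd w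

/-- Every collider (internal node instance with heads on both sides) of the
walk lies in `S`. -/
def CollidersIn (S : Set V) : ∀ {a b : V}, Walk G a b → Prop
  | _, _, .nil _ => True
  | _, _, .cons s w => collInFrom S s.headEnd w

/-- The walk has no colliders. -/
def NoColliders {a b : V} (w : Walk G a b) : Prop :=
  w.CollidersIn ∅

/-- Helper: every remaining internal node instance is a collider. -/
def allCollFrom : ∀ {a b : V}, Bool → Walk G a b → Prop
  | _, _, _, .nil _ => True
  | _, _, h, .cons s w => (h && s.headStart) = true ∧ allCollFrom s.headEnd w

/-- Every internal node instance of the walk is a collider (no noncolliders). -/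
def AllColliders : ∀ {a b : V}, Walk G a b → Prop
  | _, _, .nil _ => True
  | _, _, .cons s w => allCollFrom s.headEnd w

/-- Every edge of the walk is bidirected. -/
def AllBid : ∀ {a b : V}, Walk G a b → Prop
  | _, _, .nil _ => True
  | _, _, .cons s w => s.IsBid ∧ w.AllBid

/-- The walk consists of a directed first edge (pointing forwards) followed by
bidirected edges only (the form `α → β` or `α → γ₁ ↔ ⋯ ↔ γₙ ↔ β`). -/
def UniForm : ∀ {a b : V}, Walk G a b → Prop
  | _, _, .nil _ => False
  | _, _, .cons s w => s.IsDirF ∧ w.AllBid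

end Walk

/-- `a` is an ancestor of `b`: there is a (possibly trivial) directed path
from `a` to `b`. -/
def anc (G : DMG V) (a b : V) : Prop := Relation.ReflTransGen G.dir a b

/-- The set of ancestors of nodes of `C`. -/
def anSet (G : DMG V) (C : Set V) : Set V := {a | ∃ c ∈ C, G.anc a c}

/-- The walk is μ-connecting given `C`: it is nontrivial, its first node is not
in `C`, every collider lies in `An(C)`, no noncollider lies in `C`, and its
final edge has a head at the final node. -/
def Walk.MuConn {G : DMG V} (C : Set V) : ∀ {a b : V}, Walk G a b → Prop
  | _, _, .nil _ => False
  | a, _, .cons s w =>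
      a ∉ C ∧ Walk.openFrom C (G.anSet C) s.headEnd w ∧ (Walk.cons s w).lastHead = true

/-- `B` is μ-separated from `A` given `C` in `G`: there is no μ-connecting
walk from any node of `A` to any node of `B` given `C`. -/
def muSep (G : DMG V) (A B C : Set V) : Prop :=
  ∀ ⦃a b : V⦄, a ∈ A → b ∈ B → ∀ w : Walk G a b, ¬ w.MuConn C

/-- Two DMGs on the same node set are Markov equivalent: they induce the same
independence model via μ-separation, i.e. `I(G₁) = I(G₂)`. -/
def MarkovEq (G₁ G₂ : DMG V) : Prop :=
  ∀ A B C : Set V, muSep G₁ A B C ↔ muSep G₂ A B C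

/-- `b` is separable from `a` in `I(G)`: there is `C ⊆ V ∖ {a}` with
`⟨{a},{b} | C⟩ ∈ I(G)`. -/
def separable (G : DMG V) (a b : V) : Prop :=
  ∃ C : Set V, a ∉ C ∧ muSep G {a} {b} C

/-- `a ∈ u(b, I(G))`: `b` is inseparable from `a` in `I(G)`. -/
def inU (G : DMG V) (a b : V) : Prop := ¬ G.separable a b

/-- `G₁` is a subgraph of `G₂` (same node set, edge-set inclusion). -/
def Sub (G₁ G₂ : DMG V) : Prop :=
  (∀ a b, G₁.dir a b → G₂.dir a b) ∧ (∀ a b, G₁.bi a b → G₂.bi a b)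

/-- The DMG obtained by adding the directed edge `a → b`. -/
def addDir (G : DMG V) (a b : V) : DMG V where
  dir x y := G.dir x y ∨ (x = a ∧ y = b)
  bi := G.bi
  bi_symm := G.bi_symm

/-- The DMG obtained by adding the bidirected edge `a ↔ b`. -/
def addBi (G : DMG V) (a b : V) : DMG V where
  dir := G.dir
  bi x y := G.bi x y ∨ (x = a ∧ y = b) ∨ (x = b ∧ y = a)
  bi_symm x y h := by
    rcases h with h | h | h
    · exact Or.inl (G.bi_symm _ _ h)
    · exact Or.inr (Or.inr ⟨h.2, h.1⟩)
    · exact Or.inr (Or.inl ⟨h.2, h.1⟩)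

/-- The DMG obtained by removing the directed edge `a → b`. -/
def removeDir (G : DMG V) (a b : V) : DMG V where
  dir x y := G.dir x y ∧ ¬(x = a ∧ y = b)
  bi := G.bi
  bi_symm := G.bi_symm

/-- The DMG obtained by removing the bidirected edge `a ↔ b`. -/
def removeBi (G : DMG V) (a b : V) : DMG V where
  dir := G.dir
  bi x y := G.bi x y ∧ ¬((x = a ∧ y = b) ∨ (x = b ∧ y = a))
  bi_symm x y h := ⟨G.bi_symm _ _ h.1, fun hc => h.2 (by tauto)⟩

/-- The complete DMG: all directed and all bidirected edges present. -/
def IsComplete (G : DMG V) : Prop :=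
  (∀ a b, G.dir a b) ∧ (∀ a b, G.bi a b)

/-- A DMG is maximal if it is complete, or adding any (absent) edge changes the
induced independence model. -/
def IsMaximal (G : DMG V) : Prop :=
  G.IsComplete ∨
    ∀ a b : V, (¬ G.dir a b → ¬ MarkovEq (G.addDir a b) G) ∧
      (¬ G.bi a b → ¬ MarkovEq (G.addBi a b) G)

end DMG
namespace DMG

variable {V : Type u}

/-- An inducing path from `a` to `b`: a nontrivial path or cycle from `a` to
`b` with a head at `b`, with no noncolliders, and on which every node is an
ancestor of `a` or of `b`. -/
def IsInducingPath (G : DMG V) {a b : V} (w : Walk G a b) : Prop :=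
  w.Nontrivial ∧
  (w.nodes.Nodup ∨ (a = b ∧ w.nodes.dropLast.Nodup)) ∧
  w.lastHead = true ∧
  w.AllColliders ∧
  ∀ x ∈ w.nodes, G.anc x a ∨ G.anc x b

/-- A bidirected inducing path: an inducing path all of whose edges are bidirected. -/
def IsBidirectedIP (G : DMG V) {a b : V} (w : Walk G a b) : Prop :=
  G.IsInducingPath w ∧ w.AllBid

/-- A directed inducing path: an inducing path of the form `α → β` or
`α → γ₁ ↔ ⋯ ↔ γₙ ↔ β` with every `γᵢ` an ancestor of `β`. -/
def IsDirectedIP (G : DMG V) {a b : V} (w : Walk G a b) : Prop :=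
  G.IsInducingPath w ∧ w.UniForm ∧ ∀ x ∈ w.interior, G.anc x b

/-- There exists a nontrivial walk in `G` between `x` and `y` with no
colliders, all non-endpoint nodes in `M`, and with edge marks `hs` at `x`
(`true` = head) and `he` at `y`. -/
def ConnThrough (G : DMG V) (M : Set V) (x y : V) (hs he : Bool) : Prop :=
  ∃ w : Walk G x y, w.Nontrivial ∧ w.NoColliders ∧
    (∀ z ∈ w.interior, z ∈ M) ∧ w.firstHead = hs ∧ w.lastHead = he

/-- The latent projection `m(G, O)` of `G` on `O`: the DMG on node set `O`
having an edge (with given endpoint marks) between `α` and `β` if and only if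
`G` contains a nontrivial endpoint-identical walk between `α` and `β` with no
colliders and all non-endpoint nodes in `M = V ∖ O`. -/
def latentProj (G : DMG V) (O : Set V) : DMG {x : V // x ∈ O} where
  dir x y := ConnThrough G Oᶜ x.1 y.1 false true
  bi x y := ConnThrough G Oᶜ x.1 y.1 true true ∨ ConnThrough G Oᶜ y.1 x.1 true true
  bi_symm x y h := h.symm

/-- `x` is directedly collider-connected to `b`: there is a nontrivial walk
from `x` to `b` with a head at `b` on which every non-endpoint node is a
collider. -/
def dirCollConn (G : DMG V) (x b : V) : Prop :=
  ∃ w : Walk G x b, w.Nontrivial ∧ w.AllColliders ∧ w.lastHead = true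

/-- The set `D(a,b)` of nodes in `An({a,b})` directedly collider-connected to
`b`, except `a`. -/
def Dset (G : DMG V) (a b : V) : Set V :=
  {x | x ∈ G.anSet {a, b} ∧ G.dirCollConn x b} \ {a}

/-- `a` and `b` are potential siblings in the independence model `I(G)`. -/
def PotSib (G : DMG V) (a b : V) : Prop :=
  (G.inU b a ∧ G.inU a b) ∧
  (∀ (γ : V) (C : Set V), b ∈ C → muSep G {γ} {a} C → muSep G {γ} {b} C) ∧
  (∀ (γ : V) (C : Set V), a ∈ C → muSep G {γ} {b} C → muSep G {γ} {a} C)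

/-- `a` is a potential parent of `b` in the independence model `I(G)`. -/
def PotPar (G : DMG V) (a b : V) : Prop :=
  G.inU a b ∧
  (∀ (γ : V) (C : Set V), a ∉ C → muSep G {γ} {b} C → muSep G {γ} {a} C) ∧
  (∀ (γ δ : V) (C : Set V), a ∉ C → b ∈ C →
    muSep G {γ} {δ} C → muSep G {γ} {b} C ∨ muSep G {a} {δ} C) ∧
  (∀ (γ : V) (C : Set V), a ∉ C → muSep G {b} {γ} C → muSep G {b} {γ} (C ∪ {a}))

/-- The graph `N(I(G))`: directed edge `a → b` present iff `a` is a potential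
parent of `b` in `I(G)`, bidirected edge `a ↔ b` present iff `a` and `b` are
potential siblings in `I(G)` (potential siblinghood is symmetric). -/
def NGraph (G : DMG V) : DMG V where
  dir a b := G.PotPar a b
  bi a b := G.PotSib a b ∨ G.PotSib b a
  bi_symm _ _ h := h.symm

/-- A path is m-connecting given `C` if it is a path (no repeated nodes), no
noncollider on it is in `C` and every collider on it is in `An(C)`. -/
def Walk.MConn {G : DMG V} (C : Set V) : ∀ {a b : V}, Walk G a b → Prop
  | _, _, .nil _ => True
  | _, _, .cons s w =>
      (Walk.cons s w).nodes.Nodup ∧ Walk.openFrom C (G.anSet C) s.headEnd w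

/-- `A` and `B` are m-separated by `C`: there is no m-connecting path between
a node of `A` and a node of `B` given `C`. -/
def mSep (G : DMG V) (A B C : Set V) : Prop :=
  ∀ ⦃a b : V⦄, a ∈ A → b ∈ B →
    (∀ w : Walk G a b, ¬ w.MConn C) ∧ (∀ w : Walk G b a, ¬ w.MConn C)

/-- Auxiliary directed-edge relation of the `B`-history version of `G`. -/
def histDir (G : DMG V) (B : Set V) : (V ⊕ {x : V // x ∈ B}) → (V ⊕ {x : V // x ∈ B}) → Prop
  | .inl u, .inl v => G.dir u v
  | .inl u, .inr v => G.dir u v.1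
  | _, _ => False

/-- Auxiliary bidirected-edge relation of the `B`-history version of `G`. -/
def histBi (G : DMG V) (B : Set V) : (V ⊕ {x : V // x ∈ B}) → (V ⊕ {x : V // x ∈ B}) → Prop
  | .inl u, .inl v => G.bi u v
  | .inl u, .inr v => G.bi u v.1
  | .inr u, .inl v => G.bi u.1 v
  | .inr _, .inr _ => False

/-- The `B`-history version `G(B)` of `G`: node set `V ⊔ Bᵖ`, whose subgraph
on `V` is `G`, with additionally `α ↔ βᵖ` whenever `α ↔ β` in `G` and
`α → βᵖ` whenever `α → β` in `G` (for `α ∈ V`, `β ∈ B`). -/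
def hist (G : DMG V) (B : Set V) : DMG (V ⊕ {x : V // x ∈ B}) where
  dir := G.histDir B
  bi := G.histBi B
  bi_symm x y h := by
    cases x <;> cases y <;>
      simp only [histBi] at h ⊢ <;>
      first
        | exact G.bi_symm _ _ h
        | exact h

end DMG


/-! ### Auxiliary development for Proposition 17 -/

namespace DMG

variable {V : Type u}

/-- An edge instance traversed from `u` to `v` with marks `hs` (at `u`) and `he` (at `v`). -/
def inst (G : DMG V) (u v : V) (hs he : Bool) : Prop :=
  (hs = false ∧ he = true ∧ G.dir u v) ∨
  (hs = true ∧ he = false ∧ G.dir v u) ∨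
  (hs = true ∧ he = true ∧ G.bi u v)

/-- One admissible move in the marked-state transition system for μ-connection. -/
def strel (G : DMG V) (C : Set V) : (V × Bool) → (V × Bool) → Prop :=
  fun p q => ∃ hs : Bool, G.inst p.1 q.1 hs q.2 ∧
    (if p.2 && hs then p.1 ∈ G.anSet C else p.1 ∉ C)

/-- Existence of a μ-connecting walk, phrased via the transition system. -/
def connEx (G : DMG V) (C : Set V) (α β : V) : Prop :=
  α ∉ C ∧ Relation.TransGen (G.strel C) (α, false) (β, true)

variable {G : DMG V} {C : Set V}

lemma inst_of_step {u v : V} (s : Step G u v) : G.inst u v s.headStart s.headEnd := by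
  cases s with
  | dirF h => exact Or.inl ⟨rfl, rfl, h⟩
  | dirB h => exact Or.inr (Or.inl ⟨rfl, rfl, h⟩)
  | bid h => exact Or.inr (Or.inr ⟨rfl, rfl, h⟩)

lemma step_of_inst {u v : V} {hs he : Bool} (h : G.inst u v hs he) :
    ∃ s : Step G u v, s.headStart = hs ∧ s.headEnd = he := by
  rcases h with ⟨rfl, rfl, h⟩ | ⟨rfl, rfl, h⟩ | ⟨rfl, rfl, h⟩
  · exact ⟨.dirF h, rfl, rfl⟩
  · exact ⟨.dirB h, rfl, rfl⟩
  · exact ⟨.bid h, rfl, rfl⟩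

/-- Auxiliary "final mark" of a walk, starting from current mark `m`. -/
def lastM : ∀ {v β : V}, Walk G v β → Bool → Bool
  | _, _, .nil _, m => m
  | _, _, .cons s w, _ => lastM w s.headEnd

lemma lastHead_eq_lastM : ∀ {a c β : V} (s : Step G a c) (w : Walk G c β),
    (Walk.cons s w).lastHead = lastM w s.headEnd := by
  intro a c β s w
  induction w generalizing a with
  | nil _ => rfl
  | cons t w' ih => exact ih t

lemma rtg_of_walk : ∀ {v β : V} (w : Walk G v β) (m : Bool),
    Walk.openFrom C (G.anSet C) m w → lastM w m = true →
    Relation.ReflTransGen (G.strel C) (v, m) (β, true) := by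
  intro v β w
  induction w with
  | nil _ =>
    intro m _ hm
    simp only [lastM] at hm
    subst hm; exact Relation.ReflTransGen.refl
  | cons s w' ih =>
    intro m hopen hm
    obtain ⟨hcond, hrest⟩ := hopen
    refine Relation.ReflTransGen.head ⟨s.headStart, inst_of_step s, hcond⟩ (ih s.headEnd hrest hm)

lemma walk_of_rtg : ∀ (s : V × Bool) {β : V},
    Relation.ReflTransGen (G.strel C) s (β, true) →
    ∀ v m, s = (v, m) → ∃ w : Walk G v β, Walk.openFrom C (G.anSet C) m w ∧ lastM w m = true := by
  intro s β h
  induction h using Relation.ReflTransGen.head_induction_on with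
  | refl =>
    rintro v m hs
    rw [Prod.mk.injEq] at hs
    obtain ⟨rfl, rfl⟩ := hs
    exact ⟨Walk.nil β, trivial, rfl⟩
  | @head p q hstep _ ih =>
    rintro v m rfl
    obtain ⟨w', hopen', hlast'⟩ := ih q.1 q.2 rfl
    obtain ⟨hs', hinst, hcond⟩ := hstep
    obtain ⟨st, hshs, hshe⟩ := step_of_inst hinst
    refine ⟨Walk.cons st w', ⟨?_, ?_⟩, ?_⟩
    · rw [hshs]; exact hcond
    · rw [hshe]; exact hopen'
    · show lastM w' st.headEnd = true
      rw [hshe]; exact hlast'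

theorem connEx_iff {α β : V} : (∃ w : Walk G α β, w.MuConn C) ↔ G.connEx C α β := by
  constructor
  · rintro ⟨w, hw⟩
    cases w with
    | nil _ => exact absurd hw (by simp [Walk.MuConn])
    | cons s w' =>
      obtain ⟨hαC, hopen, hlast⟩ := hw
      rw [lastHead_eq_lastM] at hlast
      refine ⟨hαC, Relation.TransGen.head' ⟨s.headStart, inst_of_step s, by simpa using hαC⟩
        (rtg_of_walk w' s.headEnd hopen hlast)⟩
  · rintro ⟨hαC, htg⟩
    obtain ⟨p, hstep, hrtg⟩ := (Relation.TransGen.head'_iff).1 htg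
    obtain ⟨hs, hinst, _⟩ := hstep
    obtain ⟨s, hshs, hshe⟩ := step_of_inst hinst
    obtain ⟨w', hopen, hlast⟩ := walk_of_rtg p hrtg p.1 p.2 rfl
    rw [← hshe] at hopen hlast
    refine ⟨Walk.cons s w', hαC, hopen, ?_⟩
    rw [lastHead_eq_lastM]; exact hlast

end DMG

namespace DMG

variable {V : Type u} {G G₁ G₂ : DMG V} {C : Set V}

lemma anc_refl (x : V) : G.anc x x := Relation.ReflTransGen.refl

lemma anc_trans {x y z : V} (h₁ : G.anc x y) (h₂ : G.anc y z) : G.anc x z :=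
  Relation.ReflTransGen.trans h₁ h₂

lemma subset_anSet : C ⊆ G.anSet C := fun c hc => ⟨c, hc, anc_refl c⟩

lemma anc_anSet {x y : V} (h : G.anc x y) (hy : y ∈ G.anSet C) : x ∈ G.anSet C := by
  obtain ⟨c, hc, hyc⟩ := hy
  exact ⟨c, hc, anc_trans h hyc⟩

lemma anSet_mono_set {C₁ C₂ : Set V} (h : C₁ ⊆ C₂) : G.anSet C₁ ⊆ G.anSet C₂ := by
  rintro x ⟨c, hc, hxc⟩
  exact ⟨c, h hc, hxc⟩

lemma anSet_anSet : G.anSet (G.anSet C) ⊆ G.anSet C := by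
  rintro x ⟨c, hc, hxc⟩
  exact anc_anSet hxc hc

/-- Edge-wise inclusion of DMGs. -/
def EdgeLE (G₁ G₂ : DMG V) : Prop :=
  (∀ u v, G₁.dir u v → G₂.dir u v) ∧ (∀ u v, G₁.bi u v → G₂.bi u v)

lemma anc_mono (h : EdgeLE G₁ G₂) {x y : V} (hxy : G₁.anc x y) : G₂.anc x y :=
  Relation.ReflTransGen.mono (by intro u v huv; exact h.1 u v huv) _ _ hxy

lemma anSet_mono_graph (h : EdgeLE G₁ G₂) : G₁.anSet C ⊆ G₂.anSet C := by
  rintro x ⟨c, hc, hxc⟩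
  exact ⟨c, hc, anc_mono h hxc⟩

lemma inst_mono (h : EdgeLE G₁ G₂) {u v : V} {hs he : Bool} (hi : G₁.inst u v hs he) :
    G₂.inst u v hs he := by
  rcases hi with ⟨h1, h2, h3⟩ | ⟨h1, h2, h3⟩ | ⟨h1, h2, h3⟩
  · exact Or.inl ⟨h1, h2, h.1 _ _ h3⟩
  · exact Or.inr (Or.inl ⟨h1, h2, h.1 _ _ h3⟩)
  · exact Or.inr (Or.inr ⟨h1, h2, h.2 _ _ h3⟩)

lemma strel_mono (h : EdgeLE G₁ G₂) {s t : V × Bool} (hst : G₁.strel C s t) :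
    G₂.strel C s t := by
  obtain ⟨hs, hinst, hcond⟩ := hst
  refine ⟨hs, inst_mono h hinst, ?_⟩
  by_cases hb : (s.2 && hs) = true
  · simp only [hb, if_true] at hcond ⊢
    exact anSet_mono_graph h hcond
  · simp only [Bool.not_eq_true] at hb
    simp only [hb, Bool.false_eq_true, if_false] at hcond ⊢
    exact hcond

lemma connEx_mono (h : EdgeLE G₁ G₂) {α β : V} (hc : G₁.connEx C α β) : G₂.connEx C α β :=
  ⟨hc.1, Relation.TransGen.mono (by intro _ _ hst; exact strel_mono h hst) _ _ hc.2⟩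

lemma muSep_iff_connEx {A B : Set V} :
    G.muSep A B C ↔ ∀ a ∈ A, ∀ b ∈ B, ¬ G.connEx C a b := by
  constructor
  · intro h a ha b hb hc
    obtain ⟨w, hw⟩ := connEx_iff.2 hc
    exact h ha hb w hw
  · intro h a b ha hb w hw
    exact h a ha b hb (connEx_iff.1 ⟨w, hw⟩)

lemma markovEq_of_connEx (h : ∀ (C : Set V) (a b : V), G₁.connEx C a b ↔ G₂.connEx C a b) :
    MarkovEq G₁ G₂ := by
  intro A B C
  rw [muSep_iff_connEx, muSep_iff_connEx]
  constructor <;> intro hh a ha b hb hc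
  · exact hh a ha b hb ((h C a b).2 hc)
  · exact hh a ha b hb ((h C a b).1 hc)

lemma markovEq_of_edge_iff (hd : ∀ u v, G₁.dir u v ↔ G₂.dir u v)
    (hb : ∀ u v, G₁.bi u v ↔ G₂.bi u v) : MarkovEq G₁ G₂ := by
  have h12 : EdgeLE G₁ G₂ := ⟨fun u v => (hd u v).1, fun u v => (hb u v).1⟩
  have h21 : EdgeLE G₂ G₁ := ⟨fun u v => (hd u v).2, fun u v => (hb u v).2⟩
  exact markovEq_of_connEx fun C a b => ⟨connEx_mono h12, connEx_mono h21⟩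

lemma markovEq_symm (h : MarkovEq G₁ G₂) : MarkovEq G₂ G₁ := fun A B C => (h A B C).symm

lemma markovEq_trans {G₃ : DMG V} (h₁ : MarkovEq G₁ G₂) (h₂ : MarkovEq G₂ G₃) :
    MarkovEq G₁ G₃ := fun A B C => (h₁ A B C).trans (h₂ A B C)

end DMG

namespace DMG

variable {V : Type u}

variable {G : DMG V} {C : Set V}

lemma edgeLE_addDir (a b : V) : EdgeLE G (G.addDir a b) :=
  ⟨fun _ _ h => Or.inl h, fun _ _ h => h⟩

lemma edgeLE_addBi (a b : V) : EdgeLE G (G.addBi a b) :=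
  ⟨fun _ _ h => h, fun _ _ h => Or.inl h⟩

lemma anc_addDir {x y : V} (hxy : G.anc x y) {u c : V}
    (h : (G.addDir x y).anc u c) : G.anc u c := by
  induction h using Relation.ReflTransGen.head_induction_on with
  | refl => exact anc_refl _
  | head hd _ ih =>
    rcases hd with hd | ⟨rfl, rfl⟩
    · exact anc_trans (Relation.ReflTransGen.single hd) ih
    · exact anc_trans hxy ih

lemma anSet_addDir_eq {x y : V} (hxy : G.anc x y) :
    (G.addDir x y).anSet C = G.anSet C := by
  apply Set.Subset.antisymm
  · rintro u ⟨c, hc, h⟩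
    exact ⟨c, hc, anc_addDir hxy h⟩
  · exact anSet_mono_graph (edgeLE_addDir x y)

lemma anSet_addBi_eq {x y : V} : (G.addBi x y).anSet C = G.anSet C := rfl

lemma anc_addDir_decomp {x y u c : V} (h : (G.addDir x y).anc u c) :
    G.anc u c ∨ (G.anc u x ∧ G.anc y c) := by
  induction h using Relation.ReflTransGen.head_induction_on with
  | refl => exact Or.inl (anc_refl _)
  | head hd _ ih =>
    rcases hd with hd | ⟨rfl, rfl⟩
    · rcases ih with ih | ⟨ih1, ih2⟩
      · exact Or.inl (anc_trans (Relation.ReflTransGen.single hd) ih)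
      · exact Or.inr ⟨anc_trans (Relation.ReflTransGen.single hd) ih1, ih2⟩
    · rcases ih with ih | ⟨_, ih2⟩
      · exact Or.inr ⟨anc_refl _, ih⟩
      · exact Or.inr ⟨anc_refl _, ih2⟩

lemma anc_to_dir_ne {u a : V} (h : G.anc u a) : u ≠ a →
    ∃ d, d ≠ a ∧ G.anc u d ∧ G.dir d a := by
  induction h using Relation.ReflTransGen.head_induction_on with
  | refl => exact fun hne => absurd rfl hne
  | @head u' w hd hw ih =>
    intro hne
    by_cases hwa : w = a
    · subst hwa; exact ⟨u', hne, anc_refl _, hd⟩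
    · obtain ⟨d, h1, h2, h3⟩ := ih hwa
      exact ⟨d, h1, anc_trans (Relation.ReflTransGen.single hd) h2, h3⟩

/-- convenient constructors for `strel` -/
lemma strel_dirF {u v : V} {m : Bool} (h : G.dir u v) (hu : u ∉ C) :
    G.strel C (u, m) (v, true) :=
  ⟨false, Or.inl ⟨rfl, rfl, h⟩, by simpa using hu⟩

lemma strel_dirB {u v : V} {m : Bool} (h : G.dir v u)
    (hc : if m then u ∈ G.anSet C else u ∉ C) : G.strel C (u, m) (v, false) :=
  ⟨true, Or.inr (Or.inl ⟨rfl, rfl, h⟩), by simpa using hc⟩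

lemma strel_bid {u v : V} {m : Bool} (h : G.bi u v)
    (hc : if m then u ∈ G.anSet C else u ∉ C) : G.strel C (u, m) (v, true) :=
  ⟨true, Or.inr (Or.inr ⟨rfl, rfl, h⟩), by simpa using hc⟩

/-- Bidirected chain: `x ↔ c₁ ↔ ⋯ ↔ cₖ ↔ y` with interior list `l`. -/
def bidPath (G : DMG V) : V → List V → V → Prop
  | x, [], y => G.bi x y
  | x, (c :: l), y => G.bi x c ∧ bidPath G c l y

lemma bidPath_mono {G₁ G₂ : DMG V} (h : ∀ u v, G₁.bi u v → G₂.bi u v) :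
    ∀ (l : List V) (x y : V), bidPath G₁ x l y → bidPath G₂ x l y := by
  intro l
  induction l with
  | nil => exact fun x y hb => h _ _ hb
  | cons c l ih => exact fun x y hb => ⟨h _ _ hb.1, ih c y hb.2⟩

lemma bidPath_suffix : ∀ (l₁ : List V) {l₂ : List V} {x z y : V},
    bidPath G x (l₁ ++ z :: l₂) y → bidPath G z l₂ y := by
  intro l₁
  induction l₁ with
  | nil => exact fun h => h.2
  | cons w l₁ ih => exact fun h => ih h.2

/-- Forward descent along a directed path, for a node outside `An(C)`. -/
lemma FP {u b : V} (h : G.anc u b) : u ∉ G.anSet C →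
    Relation.ReflTransGen (G.strel C) (u, true) (b, true) := by
  induction h using Relation.ReflTransGen.head_induction_on with
  | refl => exact fun _ => Relation.ReflTransGen.refl
  | @head u' d hd hdb ih =>
    intro hu
    have hdAn : d ∉ G.anSet C := fun hmem => hu (anc_anSet (Relation.ReflTransGen.single hd) hmem)
    have huC : u' ∉ C := fun hmem => hu (subset_anSet hmem)
    exact Relation.ReflTransGen.head (strel_dirF hd huC) (ih hdAn)

/-- Reversed descent along a directed path. -/
lemma RP {z w : V} (h : G.anc z w) : z ∉ G.anSet C →
    Relation.ReflTransGen (G.strel C) (w, false) (z, false) := by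
  induction h using Relation.ReflTransGen.head_induction_on with
  | refl => exact fun _ => Relation.ReflTransGen.refl
  | @head z' d hd hdw ih =>
    intro hz
    have hdAn : d ∉ G.anSet C := fun hmem => hz (anc_anSet (Relation.ReflTransGen.single hd) hmem)
    have hdC : d ∉ C := fun hmem => hdAn (subset_anSet hmem)
    exact Relation.ReflTransGen.tail (ih hdAn) (strel_dirB hd (by simpa using hdC))

/-- March forward through a bidirected chain whose interior nodes are all colliders in `An C`. -/
lemma CW : ∀ (l : List V) (y c : V) (m : Bool), bidPath G y l c → (∀ z ∈ l, z ∈ G.anSet C) →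
    (if m then y ∈ G.anSet C else y ∉ C) →
    Relation.ReflTransGen (G.strel C) (y, m) (c, true) := by
  intro l
  induction l with
  | nil =>
    intro y c m hb _ co
    exact Relation.ReflTransGen.single (strel_bid hb co)
  | cons d l ih =>
    intro y c m hb hall co
    refine Relation.ReflTransGen.head (strel_bid hb.1 co) ?_
    exact ih d c true hb.2 (fun z hz => hall z (List.mem_cons_of_mem _ hz))
      (by simpa using hall d (List.mem_cons_self))

/-- March forward through a bidirected chain toward `b`, rerouting along a directed
path to `b` from the first interior node outside `An C`. -/
lemma BF : ∀ (l : List V) (c b : V), bidPath G c l b → G.anc c b → (∀ z ∈ l, G.anc z b) →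
    Relation.ReflTransGen (G.strel C) (c, true) (b, true) := by
  intro l
  induction l with
  | nil =>
    intro c b hb hcb _
    by_cases hc : c ∈ G.anSet C
    · exact Relation.ReflTransGen.single (strel_bid hb (by simpa using hc))
    · exact FP hcb hc
  | cons d l ih =>
    intro c b hb hcb hall
    by_cases hc : c ∈ G.anSet C
    · refine Relation.ReflTransGen.head (strel_bid hb.1 (by simpa using hc)) ?_
      exact ih d b hb.2 (hall d (List.mem_cons_self))
        (fun z hz => hall z (List.mem_cons_of_mem _ hz))
    · exact FP hcb hc

/-- March backward (from `y`) through a bidirected chain `c ↔ l ↔ y`, landing at `c` with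
a certified mark. -/
lemma BBack : ∀ (l : List V) (c y : V), bidPath G c l y → (∀ z ∈ c :: l, G.anc z y) →
    ∀ (m : Bool), (if m then y ∈ G.anSet C else y ∉ C) →
    ∃ mk : Bool, Relation.ReflTransGen (G.strel C) (y, m) (c, mk) ∧
      (if mk then c ∈ G.anSet C else c ∉ C) := by
  intro l
  induction l with
  | nil =>
    intro c y hb hall m co
    by_cases hc : c ∈ G.anSet C
    · exact ⟨true, Relation.ReflTransGen.single (strel_bid (G.bi_symm _ _ hb) co),
        by simpa using hc⟩
    · -- reroute along directed path c ⇝ y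
      have hcy : G.anc c y := hall c (List.mem_cons_self)
      have hcC : c ∉ C := fun hmem => hc (subset_anSet hmem)
      rcases Relation.ReflTransGen.cases_tail hcy with heq | ⟨p, hcp, hpy⟩
      · subst heq
        cases m with
        | false => exact ⟨false, Relation.ReflTransGen.refl, by simpa using hcC⟩
        | true => exact absurd (by simpa using co) hc
      · refine ⟨false, Relation.ReflTransGen.head (strel_dirB hpy co) (RP hcp hc),
          by simpa using hcC⟩
  | cons d l ih =>
    intro c y hb hall m co
    by_cases hc : c ∈ G.anSet C
    · obtain ⟨mk', hrtg, hcert⟩ := ih d y hb.2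
        (fun z hz => hall z (List.mem_cons_of_mem _ hz)) m co
      exact ⟨true, Relation.ReflTransGen.tail hrtg
        (strel_bid (G.bi_symm _ _ hb.1) hcert), by simpa using hc⟩
    · have hcy : G.anc c y := hall c (List.mem_cons_self)
      have hcC : c ∉ C := fun hmem => hc (subset_anSet hmem)
      rcases Relation.ReflTransGen.cases_tail hcy with heq | ⟨p, hcp, hpy⟩
      · subst heq
        cases m with
        | false => exact ⟨false, Relation.ReflTransGen.refl, by simpa using hcC⟩
        | true => exact absurd (by simpa using co) hc
      · refine ⟨false, Relation.ReflTransGen.head (strel_dirB hpy co) (RP hcp hc),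
          by simpa using hcC⟩

end DMG

namespace DMG

variable {V : Type u} {G : DMG V} {C : Set V}

/-- State weakening: `t` is at least as permissive a state as `s`. -/
def wkn (G : DMG V) (C : Set V) : (V × Bool) → (V × Bool) → Prop :=
  fun t s => t = s ∨ (s.2 = false ∧ t = (s.1, true) ∧ s.1 ∈ G.anSet C)

lemma wkn_pair {u : V} {m : Bool} {t : V × Bool} (hw : wkn G C t (u, m)) :
    ∃ mt, t = (u, mt) := by
  rcases hw with rfl | ⟨_, rfl, _⟩
  · exact ⟨m, rfl⟩
  · exact ⟨true, rfl⟩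

lemma wkn_co {u : V} {m : Bool} {t : V × Bool} (hw : wkn G C t (u, m))
    (hm : if m then u ∈ G.anSet C else u ∉ C) :
    ∃ mt, t = (u, mt) ∧ (if mt then u ∈ G.anSet C else u ∉ C) := by
  rcases hw with rfl | ⟨_, rfl, hmem⟩
  · exact ⟨m, rfl, hm⟩
  · exact ⟨true, rfl, by simpa using hmem⟩

lemma simgen {r : (V × Bool) → (V × Bool) → Prop}
    (H : ∀ s s', r s s' → ∀ t, wkn G C t s →
      ∃ t', wkn G C t' s' ∧ Relation.ReflTransGen (G.strel C) t t') :
    ∀ {s u : V × Bool}, Relation.TransGen r s u → ∀ t, wkn G C t s →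
      ∃ t', wkn G C t' u ∧ Relation.ReflTransGen (G.strel C) t t' := by
  intro s u htg
  induction htg with
  | single h => exact H _ _ h
  | tail _ hstep ih =>
    intro t hw
    obtain ⟨t', hw', hrtg'⟩ := ih t hw
    obtain ⟨t'', hw'', hrtg''⟩ := H _ _ hstep t' hw'
    exact ⟨t'', hw'', hrtg'.trans hrtg''⟩

lemma connEx_transfer {G' : DMG V} {α β : V}
    (H : ∀ s s', G'.strel C s s' → ∀ t, wkn G C t s →
      ∃ t', wkn G C t' s' ∧ Relation.ReflTransGen (G.strel C) t t')
    (h : G'.connEx C α β) : G.connEx C α β := by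
  obtain ⟨hα, htg⟩ := h
  obtain ⟨t', hw', hrtg⟩ := simgen H htg (α, false) (Or.inl rfl)
  have ht' : t' = (β, true) := by
    rcases hw' with rfl | ⟨h2, _, _⟩
    · rfl
    · simp at h2
  subst ht'
  refine ⟨hα, ?_⟩
  rcases Relation.reflTransGen_iff_eq_or_transGen.1 hrtg with heq | htg'
  · simp at heq
  · exact htg'

/-- Identity simulation of a single step whose edge instance is present in `G`. -/
lemma sim_same {u v : V} {m m' hs : Bool} (hinst : G.inst u v hs m')
    (hcond : if m && hs then u ∈ G.anSet C else u ∉ C)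
    {t : V × Bool} (hw : wkn G C t (u, m)) :
    ∃ t', wkn G C t' (v, m') ∧ Relation.ReflTransGen (G.strel C) t t' := by
  rcases hw with rfl | ⟨hm, rfl, hmem⟩
  · exact ⟨(v, m'), Or.inl rfl, Relation.ReflTransGen.single ⟨hs, hinst, hcond⟩⟩
  · simp only at hm
    subst hm
    refine ⟨(v, m'), Or.inl rfl, Relation.ReflTransGen.single ⟨hs, hinst, ?_⟩⟩
    cases hs with
    | false => simpa using (by simpa using hcond : u ∉ C)
    | true => simpa using hmem

/-- **Substitution lemma A**: adding a directed edge parallel to a walk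
`x → c₁ ↔ ⋯ ↔ cₖ ↔ b` whose interior nodes are ancestors of `b` preserves the model. -/
lemma lemA {x c₁ b : V} {l : List V} (hd : G.dir x c₁) (hbp : bidPath G c₁ l b)
    (hall : ∀ z ∈ c₁ :: l, G.anc z b) : MarkovEq (G.addDir x b) G := by
  have hc₁b : G.anc c₁ b := hall c₁ (List.mem_cons_self)
  have hxb : G.anc x b := anc_trans (Relation.ReflTransGen.single hd) hc₁b
  apply markovEq_of_connEx
  intro C α β
  constructor
  · intro hc
    refine connEx_transfer ?_ hc
    rintro ⟨u, m⟩ ⟨v, m'⟩ ⟨hs, hinst, hcond⟩ t hw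
    rw [show ((G.addDir x b).anSet C) = G.anSet C from anSet_addDir_eq hxb] at hcond
    rcases hinst with ⟨rfl, rfl, hdir⟩ | ⟨rfl, rfl, hdir⟩ | ⟨rfl, rfl, hbi⟩
    · rcases hdir with hdir | ⟨rfl, rfl⟩
      · exact sim_same (G := G) (Or.inl ⟨rfl, rfl, hdir⟩) hcond hw
      · -- the added edge traversed forwards
        have hxC : u ∉ C := by simpa using hcond
        obtain ⟨mt, rfl⟩ := wkn_pair hw
        refine ⟨(v, true), Or.inl rfl, Relation.ReflTransGen.head (strel_dirF hd hxC) ?_⟩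
        exact BF l c₁ v hbp hc₁b (fun z hz => hall z (List.mem_cons_of_mem _ hz))
    · rcases hdir with hdir | ⟨rfl, rfl⟩
      · exact sim_same (G := G) (Or.inr (Or.inl ⟨rfl, rfl, hdir⟩)) hcond hw
      · -- the added edge traversed backwards: from (b,m) to (x,false)
        obtain ⟨mt, rfl, co⟩ := wkn_co hw (by simpa using hcond)
        obtain ⟨mk, hrtg, hcert⟩ := BBack l c₁ u hbp hall mt co
        exact ⟨(v, false), Or.inl rfl, hrtg.tail (strel_dirB hd hcert)⟩
    · exact sim_same (G := G) (Or.inr (Or.inr ⟨rfl, rfl, hbi⟩)) hcond hw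
  · exact connEx_mono (edgeLE_addDir x b)

/-- **Substitution lemma B**: adding a bidirected edge parallel to a bidirected walk
`x ↔ ⋯ ↔ y` whose interior nodes are ancestors of `y` preserves the model. -/
lemma lemB {x y : V} {l : List V} (hbp : bidPath G x l y)
    (hall : ∀ z ∈ l, G.anc z y) : MarkovEq (G.addBi x y) G := by
  apply markovEq_of_connEx
  intro C α β
  constructor
  · intro hc
    refine connEx_transfer ?_ hc
    rintro ⟨u, m⟩ ⟨v, m'⟩ ⟨hs, hinst, hcond⟩ t hw
    rw [show ((G.addBi x y).anSet C) = G.anSet C from rfl] at hcond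
    rcases hinst with ⟨rfl, rfl, hdir⟩ | ⟨rfl, rfl, hdir⟩ | ⟨rfl, rfl, hbi⟩
    · exact sim_same (G := G) (Or.inl ⟨rfl, rfl, hdir⟩) hcond hw
    · exact sim_same (G := G) (Or.inr (Or.inl ⟨rfl, rfl, hdir⟩)) hcond hw
    · rcases hbi with hbi | ⟨rfl, rfl⟩ | ⟨rfl, rfl⟩
      · exact sim_same (G := G) (Or.inr (Or.inr ⟨rfl, rfl, hbi⟩)) hcond hw
      · -- added bidirected edge, forwards: (x,m) to (y,true)
        obtain ⟨mt, rfl, co⟩ := wkn_co hw (by simpa using hcond)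
        refine ⟨(v, true), Or.inl rfl, ?_⟩
        cases l with
        | nil => exact Relation.ReflTransGen.single (strel_bid hbp co)
        | cons c l' =>
          refine Relation.ReflTransGen.head (strel_bid hbp.1 co) ?_
          exact BF l' c v hbp.2 (hall c (List.mem_cons_self))
            (fun z hz => hall z (List.mem_cons_of_mem _ hz))
      · -- added bidirected edge, backwards: (y,m) to (x,true)
        obtain ⟨mt, rfl, co⟩ := wkn_co hw (by simpa using hcond)
        refine ⟨(v, true), Or.inl rfl, ?_⟩
        cases l with
        | nil => exact Relation.ReflTransGen.single (strel_bid (G.bi_symm _ _ hbp) co)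
        | cons c l' =>
          obtain ⟨mk, hrtg, hcert⟩ := BBack l' c u hbp.2 hall mt co
          exact hrtg.tail (strel_bid (G.bi_symm _ _ hbp.1) hcert)
  · exact connEx_mono (edgeLE_addBi x y)

/-- **Substitution lemma C**: if `x → ⋯ → y` is a nontrivial directed path and
`x ↔ y` is an edge, then adding the directed edge `x → y` preserves the model. -/
lemma lemC {x y p : V} (hd : G.dir x p) (hp : G.anc p y) (hbi : G.bi x y) :
    MarkovEq (G.addDir x y) G := by
  have hxy : G.anc x y := anc_trans (Relation.ReflTransGen.single hd) hp
  apply markovEq_of_connEx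
  intro C α β
  constructor
  · intro hc
    refine connEx_transfer ?_ hc
    rintro ⟨u, m⟩ ⟨v, m'⟩ ⟨hs, hinst, hcond⟩ t hw
    rw [show ((G.addDir x y).anSet C) = G.anSet C from anSet_addDir_eq hxy] at hcond
    rcases hinst with ⟨rfl, rfl, hdir⟩ | ⟨rfl, rfl, hdir⟩ | ⟨rfl, rfl, hbi'⟩
    · rcases hdir with hdir | ⟨rfl, rfl⟩
      · exact sim_same (G := G) (Or.inl ⟨rfl, rfl, hdir⟩) hcond hw
      · -- added edge forwards
        have hxC : u ∉ C := by simpa using hcond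
        obtain ⟨mt, rfl⟩ := wkn_pair hw
        by_cases hxA : u ∈ G.anSet C
        · refine ⟨(v, true), Or.inl rfl, Relation.ReflTransGen.single (strel_bid hbi ?_)⟩
          cases mt with
          | true => simpa using hxA
          | false => simpa using hxC
        · exact ⟨(v, true), Or.inl rfl, Relation.ReflTransGen.head (strel_dirF hd hxC)
            (FP hp (fun hmem => hxA (anc_anSet (Relation.ReflTransGen.single hd) hmem)))⟩
    · rcases hdir with hdir | ⟨rfl, rfl⟩
      · exact sim_same (G := G) (Or.inr (Or.inl ⟨rfl, rfl, hdir⟩)) hcond hw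
      · -- added edge backwards: from (y,m) to (x,false)
        obtain ⟨mt, rfl, co⟩ := wkn_co hw (by simpa using hcond)
        by_cases hxA : v ∈ G.anSet C
        · exact ⟨(v, true), Or.inr ⟨rfl, rfl, hxA⟩,
            Relation.ReflTransGen.single (strel_bid (G.bi_symm _ _ hbi) co)⟩
        · rcases Relation.ReflTransGen.cases_tail hp with heq | ⟨q, hpq, hqy⟩
          · subst heq
            exact ⟨(v, false), Or.inl rfl, Relation.ReflTransGen.single (strel_dirB hd co)⟩
          · exact ⟨(v, false), Or.inl rfl, Relation.ReflTransGen.head (strel_dirB hqy co)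
              (RP (Relation.ReflTransGen.head hd hpq) hxA)⟩
    · exact sim_same (G := G) (Or.inr (Or.inr ⟨rfl, rfl, hbi'⟩)) hcond hw
  · exact connEx_mono (edgeLE_addDir x y)

/-- **Loop lemma**: if the bidirected loop `a ↔ a` is present then adding the
directed loop `a → a` preserves the model. -/
lemma lemLoop {a : V} (hbi : G.bi a a) : MarkovEq (G.addDir a a) G := by
  apply markovEq_of_connEx
  intro C α β
  constructor
  · intro hc
    refine connEx_transfer ?_ hc
    rintro ⟨u, m⟩ ⟨v, m'⟩ ⟨hs, hinst, hcond⟩ t hw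
    rw [show ((G.addDir a a).anSet C) = G.anSet C from anSet_addDir_eq (anc_refl a)] at hcond
    rcases hinst with ⟨rfl, rfl, hdir⟩ | ⟨rfl, rfl, hdir⟩ | ⟨rfl, rfl, hbi'⟩
    · rcases hdir with hdir | ⟨hu, hv⟩
      · exact sim_same (G := G) (Or.inl ⟨rfl, rfl, hdir⟩) hcond hw
      · -- added loop forwards: (a,m) to (a,true)
        obtain rfl : u = v := hu.trans hv.symm
        have hua : u = a := hu
        have hbiu : G.bi u u := by rw [hua]; exact hbi
        have haC : u ∉ C := by simpa using hcond
        rcases hw with rfl | ⟨hm, rfl, hmem⟩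
        · cases m with
          | true => exact ⟨(u, true), Or.inl rfl, Relation.ReflTransGen.refl⟩
          | false => exact ⟨(u, true), Or.inl rfl,
              Relation.ReflTransGen.single (strel_bid hbiu (by simpa using haC))⟩
        · exact ⟨(u, true), Or.inl rfl, Relation.ReflTransGen.refl⟩
    · rcases hdir with hdir | ⟨hv, hu⟩
      · exact sim_same (G := G) (Or.inr (Or.inl ⟨rfl, rfl, hdir⟩)) hcond hw
      · -- added loop backwards: (a,m) to (a,false); stay in place
        obtain rfl : v = u := hv.trans hu.symm
        clear hu hv
        refine ⟨t, ?_, Relation.ReflTransGen.refl⟩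
        rcases hw with rfl | ⟨hm, rfl, hmem⟩
        · cases m with
          | false => exact Or.inl rfl
          | true => exact Or.inr ⟨rfl, rfl, by simpa using hcond⟩
        · exact Or.inr ⟨rfl, rfl, hmem⟩
    · exact sim_same (G := G) (Or.inr (Or.inr ⟨rfl, rfl, hbi'⟩)) hcond hw
  · exact connEx_mono (edgeLE_addDir a a)

end DMG

namespace DMG

variable {V : Type u} {G : DMG V} {C : Set V}

/-- Reaching `(β, true)` in the transition system of `G`. -/
def B2 (G : DMG V) (C : Set V) (β : V) (s : V × Bool) : Prop :=
  Relation.ReflTransGen (G.strel C) s (β, true)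

/-- There is a head-at-`b` edge instance from `b` into a state from which `(β,true)`
is reachable. -/
def Wb (G : DMG V) (C : Set V) (b β : V) : Prop :=
  ∃ (w : V) (he : Bool), G.inst b w true he ∧ B2 G C β (w, he)

/-- The simulation invariant for removing the directed edge `a → b`. -/
def QQ (G : DMG V) (C : Set V) (a b β : V) (s : V × Bool) : Prop :=
  (s.1 ≠ a → B2 G C β s) ∧
  (s.1 = a → s.2 = true → (B2 G C β (a, true) ∨ B2 G C β (b, true))) ∧
  (s.1 = a → s.2 = false → B2 G C β (a, false) ∧ Wb G C b β)

section QQ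

variable {a b β : V}

lemma QQ_intro_ne {u : V} {m : Bool} (hne : u ≠ a) (hB : B2 G C β (u, m)) :
    QQ G C a b β (u, m) :=
  ⟨fun _ => hB, fun h => absurd h hne, fun h => absurd h hne⟩

lemma QQ_intro_at (hB : B2 G C β (a, true) ∨ B2 G C β (b, true)) :
    QQ G C a b β (a, true) :=
  ⟨fun h => absurd rfl h, fun _ _ => hB, fun _ h => by simp at h⟩

lemma QQ_intro_af (h1 : B2 G C β (a, false)) (h2 : Wb G C b β) :
    QQ G C a b β (a, false) :=
  ⟨fun h => absurd rfl h, fun _ h => by simp at h, fun _ _ => ⟨h1, h2⟩⟩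

lemma QQ_true_elim {v : V} (h : QQ G C a b β (v, true)) :
    B2 G C β (v, true) ∨ (v = a ∧ B2 G C β (b, true)) := by
  by_cases hva : v = a
  · rcases h.2.1 hva rfl with hB | hB
    · left; rw [hva]; exact hB
    · right; exact ⟨hva, hB⟩
  · exact Or.inl (h.1 hva)

lemma QQ_false_elim_ne {v : V} (h : QQ G C a b β (v, false)) (hva : v ≠ a) :
    B2 G C β (v, false) := h.1 hva

lemma QQ_false_elim_a (h : QQ G C a b β (a, false)) :
    B2 G C β (a, false) ∧ Wb G C b β := h.2.2 rfl rfl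

lemma QQ_end : QQ G C a b β (β, true) := by
  by_cases hba : β = a
  · subst hba; exact QQ_intro_at (Or.inl Relation.ReflTransGen.refl)
  · exact QQ_intro_ne hba Relation.ReflTransGen.refl

end QQ

lemma qstep {a b : V} (hab : a ≠ b) (hbiab : G.bi a b) (hbibb : G.bi b b)
    (NCd : ∀ x, x ≠ a → G.dir x a → G.dir x b)
    (NCb : ∀ x, x ≠ a → G.bi x a → G.bi x b)
    {C : Set V} {β : V} :
    ∀ s s' : V × Bool, (G.addDir a b).strel C s s' → QQ G C a b β s' → QQ G C a b β s := by
  have hba : b ≠ a := fun h => hab h.symm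
  -- An-set upgrades
  have UPGne : ∀ u : V, u ≠ a → u ∈ (G.addDir a b).anSet C → u ∈ G.anSet C := by
    rintro u hne ⟨c, hc, h⟩
    rcases anc_addDir_decomp h with h' | ⟨hua, hbc⟩
    · exact ⟨c, hc, h'⟩
    · obtain ⟨d, hdne, hud, hda⟩ := anc_to_dir_ne hua hne
      exact anc_anSet (anc_trans hud (Relation.ReflTransGen.single (NCd d hdne hda)))
        ⟨c, hc, hbc⟩
  have UPGa : a ∈ (G.addDir a b).anSet C → a ∈ G.anSet C ∨ b ∈ G.anSet C := by
    rintro ⟨c, hc, h⟩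
    rcases anc_addDir_decomp h with h' | ⟨_, hbc⟩
    · exact Or.inl ⟨c, hc, h'⟩
    · exact Or.inr ⟨c, hc, hbc⟩
  rintro ⟨u, m⟩ ⟨v, m'⟩ ⟨hs, hinst, hcond⟩ hQ'
  rcases hinst with ⟨rfl, rfl, hdir⟩ | ⟨rfl, rfl, hdir⟩ | ⟨rfl, rfl, hbi'⟩
  · -- dirF instance
    rcases hdir with hdir | ⟨hua, hvb⟩
    · -- a real directed edge of G, traversed forwards: (u,m) → (v,true)
      have huC : u ∉ C := by simpa using hcond
      rcases QQ_true_elim hQ' with hBvt | ⟨hva, hBbt⟩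
      · -- continuation from (v,true) directly
        by_cases hua : u = a
        · obtain rfl : a = u := hua.symm
          cases m with
          | false =>
            refine QQ_intro_af (Relation.ReflTransGen.head (strel_dirF hdir huC) hBvt) ?_
            exact ⟨a, true, Or.inr (Or.inr ⟨rfl, rfl, G.bi_symm _ _ hbiab⟩),
              Relation.ReflTransGen.head (strel_dirF hdir huC) hBvt⟩
          | true =>
            exact QQ_intro_at (Or.inl (Relation.ReflTransGen.head (strel_dirF hdir huC) hBvt))
        · exact QQ_intro_ne hua (Relation.ReflTransGen.head (strel_dirF hdir huC) hBvt)
      · -- v = a and the continuation is from (b,true)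
        obtain rfl : a = v := hva.symm
        by_cases hua : u = a
        · obtain rfl : a = u := hua.symm
          have hstep : G.strel C (a, false) (b, true) := strel_bid hbiab (by simpa using huC)
          cases m with
          | false =>
            refine QQ_intro_af (Relation.ReflTransGen.head hstep hBbt) ?_
            exact ⟨b, true, Or.inr (Or.inr ⟨rfl, rfl, hbibb⟩), hBbt⟩
          | true => exact QQ_intro_at (Or.inr hBbt)
        · -- consume the edge: u *→ a becomes u *→ b
          have hub : G.dir u b := NCd u hua hdir
          exact QQ_intro_ne hua (Relation.ReflTransGen.head (strel_dirF hub huC) hBbt)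
    · -- the added edge a → b traversed forwards
      obtain rfl : a = u := (show u = a from hua).symm
      obtain rfl : b = v := (show v = b from hvb).symm
      have huC : a ∉ C := by simpa using hcond
      rcases QQ_true_elim hQ' with hBvt | ⟨hva, _⟩
      · cases m with
        | false =>
          refine QQ_intro_af
            (Relation.ReflTransGen.head (strel_bid hbiab (by simpa using huC)) hBvt) ?_
          exact ⟨b, true, Or.inr (Or.inr ⟨rfl, rfl, hbibb⟩), hBvt⟩
        | true => exact QQ_intro_at (Or.inr hBvt)
      · exact absurd hva hba
  · -- dirB instance: (u,m) → (v,false)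
    rcases hdir with hdir | ⟨hva, hub⟩
    · -- a real directed edge v → u of G, traversed backwards
      by_cases hua : u = a
      · obtain rfl : a = u := hua.symm
        by_cases hva : v = a
        · -- directed loop at a, traversed backwards
          obtain rfl : a = v := hva.symm
          obtain ⟨hBaf, hWb⟩ := QQ_false_elim_a hQ'
          cases m with
          | false => exact QQ_intro_af hBaf hWb
          | true =>
            have haAn' : a ∈ (G.addDir a b).anSet C := by simpa using hcond
            rcases UPGa haAn' with haAn | hbAn
            · exact QQ_intro_at (Or.inl (Relation.ReflTransGen.head
                (strel_dirB hdir (by simpa using haAn)) hBaf))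
            · obtain ⟨w, he, hinstw, hBw⟩ := hWb
              exact QQ_intro_at (Or.inr (Relation.ReflTransGen.head
                ⟨true, hinstw, by simpa using hbAn⟩ hBw))
        · -- v ≠ a
          have hBvf : B2 G C β (v, false) := QQ_false_elim_ne hQ' hva
          have hvb : G.dir v b := NCd v hva hdir
          cases m with
          | false =>
            have haC : a ∉ C := by simpa using hcond
            refine QQ_intro_af (Relation.ReflTransGen.head
              (strel_dirB hdir (by simpa using haC)) hBvf) ?_
            exact ⟨v, false, Or.inr (Or.inl ⟨rfl, rfl, hvb⟩), hBvf⟩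
          | true =>
            have haAn' : a ∈ (G.addDir a b).anSet C := by simpa using hcond
            rcases UPGa haAn' with haAn | hbAn
            · exact QQ_intro_at (Or.inl (Relation.ReflTransGen.head
                (strel_dirB hdir (by simpa using haAn)) hBvf))
            · exact QQ_intro_at (Or.inr (Relation.ReflTransGen.head
                (strel_dirB hvb (by simpa using hbAn)) hBvf))
      · -- u ≠ a
        have cb : if m then u ∈ G.anSet C else u ∉ C := by
          cases m with
          | true => simpa using UPGne u hua (by simpa using hcond)
          | false => simpa using hcond
        by_cases hva : v = a
        · obtain rfl : a = v := hva.symm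
          obtain ⟨hBaf, _⟩ := QQ_false_elim_a hQ'
          exact QQ_intro_ne hua (Relation.ReflTransGen.head (strel_dirB hdir cb) hBaf)
        · exact QQ_intro_ne hua (Relation.ReflTransGen.head (strel_dirB hdir cb)
            (QQ_false_elim_ne hQ' hva))
    · -- the added edge a → b traversed backwards: (b,m) → (a,false)
      obtain rfl : b = u := (show u = b from hub).symm
      obtain rfl : a = v := (show v = a from hva).symm
      have cb : if m then b ∈ G.anSet C else b ∉ C := by
        cases m with
        | true => simpa using UPGne b hba (by simpa using hcond)
        | false => simpa using hcond
      obtain ⟨_, hWb⟩ := QQ_false_elim_a hQ'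
      obtain ⟨w, he, hinstw, hBw⟩ := hWb
      exact QQ_intro_ne hba (Relation.ReflTransGen.head ⟨true, hinstw, by simpa using cb⟩ hBw)
  · -- bid instance: (u,m) → (v,true)
    by_cases hua : u = a
    · obtain rfl : a = u := hua.symm
      by_cases hva : v = a
      · -- bidirected loop at a
        obtain rfl : a = v := hva.symm
        rcases QQ_true_elim hQ' with hBat | ⟨_, hBbt⟩
        · -- continuation B2 (a,true)
          cases m with
          | false =>
            have haC : a ∉ C := by simpa using hcond
            refine QQ_intro_af (Relation.ReflTransGen.head
              (strel_bid hbi' (by simpa using haC)) hBat) ?_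
            exact ⟨a, true, Or.inr (Or.inr ⟨rfl, rfl, G.bi_symm _ _ hbiab⟩), hBat⟩
          | true => exact QQ_intro_at (Or.inl hBat)
        · cases m with
          | false =>
            have haC : a ∉ C := by simpa using hcond
            refine QQ_intro_af (Relation.ReflTransGen.head
              (strel_bid hbiab (by simpa using haC)) hBbt) ?_
            exact ⟨b, true, Or.inr (Or.inr ⟨rfl, rfl, hbibb⟩), hBbt⟩
          | true =>
            have haAn' : a ∈ (G.addDir a b).anSet C := by simpa using hcond
            rcases UPGa haAn' with haAn | hbAn
            · exact QQ_intro_at (Or.inl (Relation.ReflTransGen.head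
                (strel_bid hbiab (by simpa using haAn)) hBbt))
            · exact QQ_intro_at (Or.inr hBbt)
      · -- u = a, v ≠ a
        have hBvt : B2 G C β (v, true) := by
          rcases QQ_true_elim hQ' with hB | ⟨h, _⟩
          · exact hB
          · exact absurd h hva
        have hbv : G.bi b v := G.bi_symm _ _ (NCb v hva (G.bi_symm _ _ hbi'))
        cases m with
        | false =>
          have haC : a ∉ C := by simpa using hcond
          refine QQ_intro_af (Relation.ReflTransGen.head
            (strel_bid hbi' (by simpa using haC)) hBvt) ?_
          exact ⟨v, true, Or.inr (Or.inr ⟨rfl, rfl, hbv⟩), hBvt⟩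
        | true =>
          have haAn' : a ∈ (G.addDir a b).anSet C := by simpa using hcond
          rcases UPGa haAn' with haAn | hbAn
          · exact QQ_intro_at (Or.inl (Relation.ReflTransGen.head
              (strel_bid hbi' (by simpa using haAn)) hBvt))
          · exact QQ_intro_at (Or.inr (Relation.ReflTransGen.head
              (strel_bid hbv (by simpa using hbAn)) hBvt))
    · -- u ≠ a
      have cb : if m then u ∈ G.anSet C else u ∉ C := by
        cases m with
        | true => simpa using UPGne u hua (by simpa using hcond)
        | false => simpa using hcond
      rcases QQ_true_elim hQ' with hBvt | ⟨hva, hBbt⟩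
      · exact QQ_intro_ne hua (Relation.ReflTransGen.head (strel_bid hbi' cb) hBvt)
      · obtain rfl : a = v := hva.symm
        have hub : G.bi u b := NCb u hua hbi'
        exact QQ_intro_ne hua (Relation.ReflTransGen.head (strel_bid hub cb) hBbt)

/-- **Case-1 lemma**: with `a ↔ b`, `b ↔ b`, and all head-edges at `a` duplicated at `b`,
adding the directed edge `a → b` preserves the model. -/
lemma lemQ {a b : V} (hab : a ≠ b) (hbiab : G.bi a b) (hbibb : G.bi b b)
    (NCd : ∀ x, x ≠ a → G.dir x a → G.dir x b)
    (NCb : ∀ x, x ≠ a → G.bi x a → G.bi x b) :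
    MarkovEq (G.addDir a b) G := by
  apply markovEq_of_connEx
  intro C α β
  constructor
  · rintro ⟨hα, htg⟩
    have hQall : ∀ s : V × Bool, Relation.TransGen ((G.addDir a b).strel C) s (β, true) →
        QQ G C a b β s := by
      intro s htg'
      induction htg' using Relation.TransGen.head_induction_on with
      | single h => exact qstep hab hbiab hbibb NCd NCb _ _ h QQ_end
      | head h _ ih => exact qstep hab hbiab hbibb NCd NCb _ _ h ih
    have hQ : QQ G C a b β (α, false) := hQall _ htg
    have hB : B2 G C β (α, false) := by
      by_cases hαa : α = a
      · subst hαa; exact (QQ_false_elim_a hQ).1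
      · exact hQ.1 hαa
    refine ⟨hα, ?_⟩
    rcases Relation.reflTransGen_iff_eq_or_transGen.1 hB with heq | htg'
    · simp at heq
    · exact htg'
  · exact connEx_mono (edgeLE_addDir a b)

end DMG

namespace DMG

variable {V : Type u} {G : DMG V}

/-- A relation chain from `s` through `l` ending at `t`. -/
def chainTo (r : (V × Bool) → (V × Bool) → Prop) (s : V × Bool) (l : List (V × Bool))
    (t : V × Bool) : Prop := List.Chain r s (l ++ [t])

section Extract

lemma chain_cons' {r : (V × Bool) → (V × Bool) → Prop} {x y : V × Bool} {l : List (V × Bool)} :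
    List.Chain r x (y :: l) ↔ r x y ∧ List.Chain r y l :=
  List.isChain_cons_cons

variable {a b : V} {Cs A2 : Set V}

lemma chainTo_restart {u : V} {mu : Bool} {l t} (h : chainTo (G.strel Cs) (u, mu) l t)
    (huC : u ∉ Cs) : chainTo (G.strel Cs) (u, false) l t := by
  have restart : ∀ q, G.strel Cs (u, mu) q → G.strel Cs (u, false) q := by
    rintro q ⟨hs, hinst, _⟩
    exact ⟨hs, hinst, by simpa using huC⟩
  cases l with
  | nil =>
    rw [chainTo, List.nil_append, chain_cons'] at h ⊢
    exact ⟨restart _ h.1, h.2⟩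
  | cons c l' =>
    rw [chainTo, List.cons_append, chain_cons'] at h ⊢
    exact ⟨restart _ h.1, h.2⟩

/-- Trimming: restrict to the part of the chain after the last interior visit to `a`. -/
lemma chain_trim : ∀ (n : ℕ) (l : List (V × Bool)), l.length ≤ n →
    chainTo (G.strel Cs) (a, false) l (b, true) →
    ∃ l', chainTo (G.strel Cs) (a, false) l' (b, true) ∧ ∀ s ∈ l', s.1 ≠ a := by
  intro n
  induction n with
  | zero =>
    intro l hlen hch
    refine ⟨l, hch, ?_⟩
    have : l = [] := List.length_eq_zero_iff.1 (Nat.le_zero.1 hlen)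
    subst this
    intro s hs; simp at hs
  | succ n ih =>
    intro l hlen hch
    by_cases hex : ∃ s ∈ l, s.1 = a
    · obtain ⟨s, hsmem, hsa⟩ := hex
      obtain ⟨l₁, l₂, rfl⟩ := List.append_of_mem hsmem
      have hch2 : List.Chain (G.strel Cs) s (l₂ ++ [(b, true)]) := by
        rw [chainTo, List.append_assoc, List.cons_append] at hch
        exact (List.isChain_cons_split.1 hch).2
      have hs' : s = (s.1, s.2) := rfl
      have haC : a ∉ Cs := by
        -- a ∉ Cs is needed for restart; derive from the first condition of hch
        have : l₁ ++ s :: l₂ ≠ [] := by simp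
        rcases hl : l₁ ++ s :: l₂ with _ | ⟨c, l₃⟩
        · exact absurd hl this
        · rw [chainTo, hl, List.cons_append, chain_cons'] at hch
          obtain ⟨⟨hs0, _, hcond⟩, _⟩ := hch
          simpa using hcond
      have hch3 : chainTo (G.strel Cs) (a, false) l₂ (b, true) := by
        have : s = (a, s.2) := by rw [← hsa]
        rw [this] at hch2
        exact chainTo_restart hch2 haC
      have hlen2 : l₂.length ≤ n := by
        have := hlen
        simp only [List.length_append, List.length_cons] at this
        omega
      exact ih l₂ hlen2 hch3
    · push_neg at hex
      exact ⟨l, hch, hex⟩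

/-- Chase to the right: from a head-marked state, the chain end `b` is reachable enough
to put the current node in `A2`. -/
lemma chase (hsub : G.anSet Cs ⊆ A2) (hcl : ∀ x y : V, G.anc x y → y ∈ A2 → x ∈ A2)
    (hbA2 : b ∈ A2) : ∀ (l : List (V × Bool)) (w : V),
    chainTo (G.strel Cs) (w, true) l (b, true) → w ∈ A2 := by
  intro l
  induction l with
  | nil =>
    intro w hch
    rw [chainTo, List.nil_append, chain_cons'] at hch
    obtain ⟨⟨hs, hinst, hcond⟩, _⟩ := hch
    rcases hinst with ⟨rfl, _, hdir⟩ | ⟨rfl, hhe, _⟩ | ⟨rfl, _, _⟩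
    · exact hcl _ _ (Relation.ReflTransGen.single hdir) hbA2
    · simp at hhe
    · exact hsub (by simpa using hcond)
  | cons s₁ l' ih =>
    intro w hch
    rw [chainTo, List.cons_append, chain_cons'] at hch
    obtain ⟨⟨hs, hinst, hcond⟩, hch'⟩ := hch
    obtain ⟨v₁, m₁⟩ := s₁
    rcases hinst with ⟨rfl, hhe, hdir⟩ | ⟨rfl, hhe, _⟩ | ⟨rfl, _, _⟩
    · have hm : m₁ = true := hhe
      subst hm
      exact hcl _ _ (Relation.ReflTransGen.single hdir) (ih v₁ hch')
    · exact hsub (by simpa using hcond)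
    · exact hsub (by simpa using hcond)

/-- All interior marks are heads (else a noncollider in `Cs` blocks the chain). -/
lemma marks_true (hsub : G.anSet Cs ⊆ A2) (hcl : ∀ x y : V, G.anc x y → y ∈ A2 → x ∈ A2)
    (haA2 : a ∈ A2) (hCs : ∀ z, z ∈ A2 → z ≠ a → z ∈ Cs) :
    ∀ (l : List (V × Bool)) (u : V) (mu : Bool),
    chainTo (G.strel Cs) (u, mu) l (b, true) →
    (mu = false → (u = a ∨ u ∈ A2)) → (∀ s ∈ l, s.1 ≠ a) →
    ∀ s ∈ l, s.2 = true := by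
  intro l
  induction l with
  | nil => intro u mu _ _ _ s hs; simp at hs
  | cons s₁ l' ih =>
    intro u mu hch hu hno
    rw [chainTo, List.cons_append, chain_cons'] at hch
    obtain ⟨⟨hs, hinst, hcond⟩, hch'⟩ := hch
    obtain ⟨v₁, m₁⟩ := s₁
    have hu₁ : m₁ = false → (v₁ = a ∨ v₁ ∈ A2) := by
      intro h1
      subst h1
      rcases hinst with ⟨_, hhe, _⟩ | ⟨rfl, _, hdir⟩ | ⟨_, hhe, _⟩
      · simp at hhe
      · -- v₁ → u in G; chase left via the condition at u
        right
        have : u = a ∨ u ∈ A2 := by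
          cases mu with
          | true => exact Or.inr (hsub (by simpa using hcond))
          | false => exact hu rfl
        rcases this with rfl | hA
        · exact hcl _ _ (Relation.ReflTransGen.single hdir) haA2
        · exact hcl _ _ (Relation.ReflTransGen.single hdir) hA
      · simp at hhe
    have hm₁ : m₁ = true := by
      cases m₁ with
      | true => rfl
      | false =>
        exfalso
        have hv₁ : v₁ ∈ Cs := by
          rcases hu₁ rfl with h | h
          · exact absurd h (hno (v₁, false) (List.mem_cons_self))
          · exact hCs _ h (hno (v₁, false) (List.mem_cons_self))
        -- the next transition from (v₁,false) requires v₁ ∉ Cs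
        cases l' with
        | nil =>
          rw [List.nil_append, chain_cons'] at hch'
          obtain ⟨⟨hs₂, _, hcond₂⟩, _⟩ := hch'
          exact (by simpa using hcond₂ : v₁ ∉ Cs) hv₁
        | cons s₂ l'' =>
          rw [List.cons_append, chain_cons'] at hch'
          obtain ⟨⟨hs₂, _, hcond₂⟩, _⟩ := hch'
          exact (by simpa using hcond₂ : v₁ ∉ Cs) hv₁
    subst hm₁
    intro s hsmem
    rcases List.mem_cons.1 hsmem with rfl | hsmem'
    · rfl
    · exact ih v₁ true hch' (by simp) (fun t ht => hno t (List.mem_cons_of_mem _ ht)) s hsmem'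

/-- Build the bidirected path from an all-collider chain. -/
lemma build (hsub : G.anSet Cs ⊆ A2) (hcl : ∀ x y : V, G.anc x y → y ∈ A2 → x ∈ A2)
    (hbA2 : b ∈ A2) (hCs : ∀ z, z ∈ A2 → z ≠ a → z ∈ Cs) :
    ∀ (l : List (V × Bool)) (v : V),
    chainTo (G.strel Cs) (v, true) l (b, true) →
    (∀ s ∈ ((v, true) : V × Bool) :: l, s.1 ≠ a) → (∀ s ∈ l, s.2 = true) →
    ∃ lv : List V, bidPath G v lv b ∧ ∀ z ∈ v :: lv, z ∈ A2 ∧ z ≠ a := by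
  intro l
  induction l with
  | nil =>
    intro v hch hno _
    have hvA2 : v ∈ A2 := chase hsub hcl hbA2 [] v hch
    have hvna : v ≠ a := hno (v, true) (List.mem_cons_self)
    rw [chainTo, List.nil_append, chain_cons'] at hch
    obtain ⟨⟨hs, hinst, hcond⟩, _⟩ := hch
    rcases hinst with ⟨rfl, _, _⟩ | ⟨rfl, hhe, _⟩ | ⟨rfl, _, hbi⟩
    · exact absurd (hCs v hvA2 hvna) (by simpa using hcond)
    · simp at hhe
    · exact ⟨[], hbi, by
        rintro z hz
        rcases List.mem_cons.1 hz with rfl | hz'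
        · exact ⟨hvA2, hvna⟩
        · simp at hz'⟩
  | cons s₁ l' ih =>
    intro v hch hno hmk
    have hvA2 : v ∈ A2 := chase hsub hcl hbA2 _ v hch
    have hvna : v ≠ a := hno (v, true) (List.mem_cons_self)
    rw [chainTo, List.cons_append, chain_cons'] at hch
    obtain ⟨⟨hs, hinst, hcond⟩, hch'⟩ := hch
    obtain ⟨v₁, m₁⟩ := s₁
    have hm₁ : m₁ = true := hmk (v₁, m₁) (List.mem_cons_self)
    subst hm₁
    rcases hinst with ⟨rfl, _, _⟩ | ⟨rfl, hhe, _⟩ | ⟨rfl, _, hbi⟩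
    · exact absurd (hCs v hvA2 hvna) (by simpa using hcond)
    · simp at hhe
    · obtain ⟨lv', hbp', hcond'⟩ := ih v₁ hch'
        (by
          rintro s hsm
          rcases List.mem_cons.1 hsm with rfl | hsm'
          · exact hno (v₁, true) (List.mem_cons_of_mem _ (List.mem_cons_self))
          · exact hno s (List.mem_cons_of_mem _ (List.mem_cons_of_mem _ hsm')))
        (fun t ht => hmk t (List.mem_cons_of_mem _ ht))
      refine ⟨v₁ :: lv', ⟨hbi, hbp'⟩, ?_⟩
      rintro z hz
      rcases List.mem_cons.1 hz with rfl | hz'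
      · exact ⟨hvA2, hvna⟩
      · exact hcond' z hz'

end Extract

end DMG

namespace DMG

variable {V : Type u}

variable {G : DMG V}

/-- Structural extraction from inseparability at the canonical separating set. -/
lemma extract {a b : V} (hnd : ¬ G.dir a b)
    (hconn : G.connEx ((G.anSet {a, b}) \ {a}) a b) :
    (∃ c lv, G.dir a c ∧ bidPath G c lv b ∧ ∀ z ∈ c :: lv, z ∈ G.anSet {a, b} ∧ z ≠ a) ∨
    (∃ c lv, G.bi a c ∧ bidPath G c lv b ∧ ∀ z ∈ c :: lv, z ∈ G.anSet {a, b} ∧ z ≠ a) ∨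
    G.bi a b := by
  have hsub : G.anSet ((G.anSet {a, b}) \ {a}) ⊆ G.anSet {a, b} :=
    fun x hx => anSet_anSet (anSet_mono_set Set.diff_subset hx)
  have hcl : ∀ x y : V, G.anc x y → y ∈ G.anSet {a, b} → x ∈ G.anSet {a, b} :=
    fun x y hxy hy => anc_anSet hxy hy
  have hbA2 : b ∈ G.anSet {a, b} := ⟨b, by simp, anc_refl b⟩
  have haA2 : a ∈ G.anSet {a, b} := ⟨a, by simp, anc_refl a⟩
  have hCs : ∀ z, z ∈ G.anSet {a, b} → z ≠ a → z ∈ (G.anSet {a, b}) \ {a} :=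
    fun z hz hne => ⟨hz, by simp [hne]⟩
  obtain ⟨haCs, htg⟩ := hconn
  obtain ⟨l, hch, hlast⟩ := List.exists_isChain_cons_of_relationReflTransGen htg.to_reflTransGen
  have hlne : l ≠ [] := by
    rintro rfl
    rw [List.getLast_singleton] at hlast
    simp at hlast
  have hlast' : l.getLast hlne = ((b, true) : V × Bool) := by
    rw [List.getLast_cons hlne] at hlast
    exact hlast
  have hconv : chainTo (G.strel ((G.anSet {a, b}) \ {a})) (a, false) l.dropLast (b, true) := by
    have h1 : l.dropLast ++ [l.getLast hlne] = l := List.dropLast_append_getLast hlne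
    rw [chainTo]
    rw [← h1, hlast'] at hch
    exact hch
  obtain ⟨l', hch', hno⟩ := chain_trim l.dropLast.length l.dropLast le_rfl hconv
  have hmk := marks_true hsub hcl haA2 hCs l' a false hch' (fun _ => Or.inl rfl) hno
  cases l' with
  | nil =>
    rw [chainTo, List.nil_append, chain_cons'] at hch'
    obtain ⟨⟨hs, hinst, _⟩, _⟩ := hch'
    rcases hinst with ⟨_, _, hdir⟩ | ⟨_, hhe, _⟩ | ⟨_, _, hbi⟩
    · exact absurd hdir hnd
    · simp at hhe
    · exact Or.inr (Or.inr hbi)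
  | cons s₁ l'' =>
    rw [chainTo, List.cons_append, chain_cons'] at hch'
    obtain ⟨⟨hs, hinst, _⟩, hch''⟩ := hch'
    obtain ⟨v₁, m₁⟩ := s₁
    have hm₁ : m₁ = true := hmk (v₁, m₁) (List.mem_cons_self)
    subst hm₁
    have hch₂ : chainTo (G.strel ((G.anSet {a, b}) \ {a})) (v₁, true) l'' (b, true) := hch''
    have hno' : ∀ s ∈ ((v₁, true) : V × Bool) :: l'', s.1 ≠ a := fun s hsm => hno s hsm
    have hmk'' : ∀ s ∈ l'', s.2 = true :=
      fun t ht => hmk t (List.mem_cons_of_mem _ ht)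
    obtain ⟨lv, hbp, hcond⟩ := build hsub hcl hbA2 hCs l'' v₁ hch₂ hno' hmk''
    rcases hinst with ⟨_, _, hdir⟩ | ⟨_, hhe, _⟩ | ⟨_, _, hbi⟩
    · exact Or.inl ⟨v₁, lv, hdir, hbp, hcond⟩
    · simp at hhe
    · exact Or.inr (Or.inl ⟨v₁, lv, hbi, hbp, hcond⟩)

section Main

variable {N : DMG V}

lemma force_dir (hmax : N.IsMaximal) {x y : V} (h : MarkovEq (N.addDir x y) N) :
    N.dir x y := by
  rcases hmax with ⟨hd, _⟩ | hcl
  · exact hd x y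
  · by_contra hn
    exact (hcl x y).1 hn h

lemma force_bi (hmax : N.IsMaximal) {x y : V} (h : MarkovEq (N.addBi x y) N) :
    N.bi x y := by
  rcases hmax with ⟨_, hb⟩ | hcl
  · exact hb x y
  · by_contra hn
    exact (hcl x y).2 hn h

theorem stmt17' (N : DMG V) (hmax : N.IsMaximal)
    (a b : V) (he : N.dir a b) :
    DMG.MarkovEq (N.removeDir a b) N ↔ (N.removeDir a b).inU a b := by
  constructor
  · -- easy direction
    intro hME
    rintro ⟨C, haC, hsep⟩
    have hsepN : N.muSep {a} {b} C := (hME {a} {b} C).1 hsep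
    have hMu : (Walk.cons (Step.dirF he) (Walk.nil b)).MuConn C := ⟨haC, trivial, rfl⟩
    exact hsepN rfl rfl _ hMu
  · intro hinU
    have hGdir_ab : ¬ (N.removeDir a b).dir a b := fun h => h.2 ⟨rfl, rfl⟩
    have hGsub : EdgeLE (N.removeDir a b) N := ⟨fun u v h => h.1, fun u v h => h⟩
    have heqv : MarkovEq ((N.removeDir a b).addDir a b) N := by
      apply markovEq_of_edge_iff
      · intro x y
        constructor
        · rintro (⟨h, _⟩ | ⟨rfl, rfl⟩)
          · exact h
          · exact he
        · intro h
          by_cases hxy : x = a ∧ y = b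
          · exact Or.inr hxy
          · exact Or.inl ⟨h, hxy⟩
      · intro x y; exact Iff.rfl
    suffices hsuff : MarkovEq ((N.removeDir a b).addDir a b) (N.removeDir a b) by
      exact markovEq_trans (markovEq_symm hsuff) heqv
    have hconn : ∀ C : Set V, a ∉ C → (N.removeDir a b).connEx C a b := by
      intro C haC
      by_contra hncon
      refine hinU ⟨C, haC, ?_⟩
      rw [muSep_iff_connEx]
      rintro x hx y hy hc
      rw [Set.mem_singleton_iff] at hx hy
      subst hx; subst hy
      exact hncon hc
    have haCs : a ∉ ((N.removeDir a b).anSet {a, b}) \ {a} := fun h => h.2 rfl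
    have hstruct := extract hGdir_ab (hconn _ haCs)
    have hA2toN : ∀ z, z ∈ (N.removeDir a b).anSet {a, b} → N.anc z b := by
      rintro z ⟨d, hd, hzd⟩
      have hzdN : N.anc z d := anc_mono hGsub hzd
      rcases hd with rfl | hd
      · exact anc_trans hzdN (Relation.ReflTransGen.single he)
      · rw [Set.mem_singleton_iff] at hd
        subst hd
        exact hzdN
    -- every interior node can be forced into An_{N-e}(b)
    have hforce_anc : ∀ (c : V) (lv : List V), bidPath (N.removeDir a b) c lv b →
        (∀ z ∈ c :: lv, z ∈ (N.removeDir a b).anSet {a, b} ∧ z ≠ a) →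
        ∀ z ∈ c :: lv, (N.removeDir a b).anc z b := by
      intro c lv hbp hcond z hz
      obtain ⟨hzA2, hzna⟩ := hcond z hz
      by_cases hzb : (N.removeDir a b).anc z b
      · exact hzb
      · obtain ⟨d, hd, hzd⟩ := hzA2
        have hza : (N.removeDir a b).anc z a := by
          rcases hd with rfl | hd
          · exact hzd
          · rw [Set.mem_singleton_iff] at hd
            subst hd
            exact absurd hzd hzb
        obtain ⟨l₁, l₂, hdecomp⟩ := List.append_of_mem hz
        have hbp₂ : bidPath (N.removeDir a b) z l₂ b := by
          cases l₁ with
          | nil =>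
            obtain ⟨rfl, rfl⟩ : c = z ∧ lv = l₂ := by
              rw [List.nil_append] at hdecomp
              exact ⟨(List.cons.injEq .. ▸ hdecomp).1, (List.cons.injEq .. ▸ hdecomp).2⟩
            exact hbp
          | cons c' l₁' =>
            have h2 : lv = l₁' ++ z :: l₂ := (List.cons.injEq .. ▸ hdecomp).2
            rw [h2] at hbp
            exact bidPath_suffix l₁' hbp
        have hbpN : bidPath N z l₂ b := bidPath_mono (G₁ := N.removeDir a b) (G₂ := N) (fun _ _ h => h) l₂ z b hbp₂
        have hallN : ∀ w ∈ l₂, N.anc w b := by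
          intro w hw
          refine hA2toN w (hcond w ?_).1
          rw [hdecomp]
          exact List.mem_append_right l₁ (List.mem_cons_of_mem _ hw)
        have hNbi : N.bi z b := force_bi hmax (lemB hbpN hallN)
        rcases Relation.ReflTransGen.cases_head hza with heq | ⟨p, hzp, hpa⟩
        · exact absurd heq hzna
        · have hpb : N.anc p b :=
            anc_trans (anc_mono hGsub hpa) (Relation.ReflTransGen.single he)
          have hNd : N.dir z b := force_dir hmax (lemC hzp.1 hpb hNbi)
          exact Relation.ReflTransGen.single ⟨hNd, fun hh => hzna hh.1⟩
    -- case 1 / case 3 common machinery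
    have mainQ : N.bi a b → MarkovEq ((N.removeDir a b).addDir a b) (N.removeDir a b) := by
      intro hNab
      by_cases hab : a = b
      · have hbiaa : (N.removeDir a b).bi a b := hNab
        exact hab ▸ lemLoop (a := a) (hab ▸ hbiaa)
      · have NCd : ∀ x, x ≠ a → (N.removeDir a b).dir x a → (N.removeDir a b).dir x b := by
          intro x hx hxa
          have hall : ∀ z ∈ ([a] : List V), N.anc z b := by
            intro z hz
            rw [List.mem_singleton] at hz
            subst hz
            exact Relation.ReflTransGen.single he
          have hMEd : MarkovEq (N.addDir x b) N :=
            lemA (c₁ := a) (l := []) hxa.1 hNab hall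
          exact ⟨force_dir hmax hMEd, fun hh => hx hh.1⟩
        have NCb : ∀ x, x ≠ a → (N.removeDir a b).bi x a → (N.removeDir a b).bi x b := by
          intro x hx hxa
          have hall : ∀ z ∈ ([a] : List V), N.anc z b := by
            intro z hz
            rw [List.mem_singleton] at hz
            subst hz
            exact Relation.ReflTransGen.single he
          have hMEb : MarkovEq (N.addBi x b) N := lemB (l := [a]) ⟨hxa, hNab⟩ hall
          exact force_bi hmax hMEb
        have hbibb : (N.removeDir a b).bi b b :=
          NCb b (fun h => hab h.symm) (N.bi_symm _ _ hNab)
        exact lemQ hab hNab hbibb NCd NCb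
    rcases hstruct with ⟨c, lv, hdir, hbp, hcond⟩ | ⟨c, lv, hbi, hbp, hcond⟩ | hbiab
    · exact lemA hdir hbp (hforce_anc c lv hbp hcond)
    · have hbpN : bidPath N a (c :: lv) b :=
        ⟨hbi, bidPath_mono (G₁ := N.removeDir a b) (G₂ := N) (fun _ _ h => h) lv c b hbp⟩
      have hallN : ∀ z ∈ c :: lv, N.anc z b := fun z hz => hA2toN z (hcond z hz).1
      exact mainQ (force_bi hmax (lemB hbpN hallN))
    · exact mainQ hbiab

end Main

end DMG

/-- Proposition 17: in a maximal DMG `N` with directed edge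
`e = a → b`, `I(N - e) = I(N)` iff `a ∈ u(b, I(N - e))`. -/
theorem stmt17 {V : Type u} [Fintype V] (N : DMG V) (hmax : N.IsMaximal)
    (a b : V) (he : N.dir a b) :
    DMG.MarkovEq (N.removeDir a b) N ↔ (N.removeDir a b).inU a b := by
  exact DMG.stmt17' N hmax a b he
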